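/- For all n ≥ 1 and m ≥ 1, the number of m-th order partitions of an n-element set equals the m-th order Bell number: |℘_n^(m)| = B_n^(m). -/

import Mathlib

/-- `m`-th order ("hyper") partitions of a finite set `s`:
a chain `(P₁, …, P_m)` where `P₁` is a partition of `s` and each `P_{j+1}`
is a partition of the set of blocks of `P_j`. For `m = 0` it is `s` itself
(a single trivial object). -/
def HyperPartition : (m : ℕ) → {α : Type} → [DecidableEq α] → Finset α → Type
  | 0, _, _, _ => PUnit
  | m + 1, _, _, s => (P : Finpartition s) × HyperPartition m P.parts

/-- The number of blocks of the outermost partition of a hyper partition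
(for `m = 0`, by convention, the cardinality of the underlying set). -/
def HyperPartition.outerBlocks :
    (m : ℕ) → {α : Type} → [DecidableEq α] → {s : Finset α} →
      HyperPartition m s → ℕ
  | 0, _, _, s, _ => s.card
  | 1, _, _, _, p => p.1.parts.card
  | m + 2, _, _, _, p => HyperPartition.outerBlocks (m + 1) p.2

/-- `|℘ₙ^(m)|`: the number of `m`-th order partitions of an `n`-element set. -/
noncomputable def hyperBell (m n : ℕ) : ℕ :=
  Nat.card (HyperPartition m (Finset.univ : Finset (Fin n)))

/-- The `m`-th order Stirling number `S^(m)(n,k)`: the number of `m`-th order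
partitions of an `n`-element set whose outermost partition has exactly `k` blocks. -/
noncomputable def hyperStirling (m n k : ℕ) : ℕ :=
  Nat.card {p : HyperPartition m (Finset.univ : Finset (Fin n)) //
    HyperPartition.outerBlocks m p = k}

/-- The ordinary Stirling number of the second kind `S(n,k)`: the number of
set partitions of an `n`-element set into exactly `k` blocks. -/
noncomputable def stirling (n k : ℕ) : ℕ :=
  Nat.card {P : Finpartition (Finset.univ : Finset (Fin n)) // P.parts.card = k}

/-- Composition `f(g(x))` of formal power series (intended for `g` with zero
constant term, in which case `coeff n (g ^ i) = 0` for `i > n`). -/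
noncomputable def psComp (f g : PowerSeries ℚ) : PowerSeries ℚ :=
  PowerSeries.mk fun n =>
    PowerSeries.coeff n
      (∑ i ∈ Finset.range (n + 1), PowerSeries.C (PowerSeries.coeff i f) * g ^ i)

/-- The iterated exponential series: `E₀ = exp x`, `E_{m+1} = exp (E_m - 1)`. -/
noncomputable def E : ℕ → PowerSeries ℚ
  | 0 => PowerSeries.exp ℚ
  | m + 1 => psComp (PowerSeries.exp ℚ) (E m - 1)

/-- The `m`-th order Bell number `Bₙ^(m) = n! · [xⁿ] E_m(x)`. -/
noncomputable def bell (m n : ℕ) : ℚ :=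
  (n.factorial : ℚ) * PowerSeries.coeff n (E m)

section PS
open PowerSeries Finset


lemma coeff_pow_eq_zero {h : PowerSeries ℚ} (h0 : constantCoeff h = 0)
    {n i : ℕ} (hni : n < i) : coeff n (h ^ i) = 0 := by
  have hd : (X : PowerSeries ℚ) ^ i ∣ h ^ i :=
    pow_dvd_pow_of_dvd (X_dvd_iff.2 h0) i
  exact (X_pow_dvd_iff.1 hd) n hni

lemma coeff_psComp (f g : PowerSeries ℚ) (n : ℕ) :
    coeff n (psComp f g)
      = ∑ i ∈ range (n + 1), coeff i f * coeff n (g ^ i) := by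
  simp [psComp, coeff_mk]

lemma coeff_eval₂ {h : PowerSeries ℚ} (h0 : constantCoeff h = 0)
    (P : Polynomial ℚ) (n : ℕ) :
    coeff n (Polynomial.eval₂ (C) h P)
      = ∑ i ∈ range (n + 1), P.coeff i * coeff n (h ^ i) := by
  rw [Polynomial.eval₂_eq_sum, Polynomial.sum]
  rw [map_sum]
  simp_rw [coeff_C_mul]
  have e1 : ∑ i ∈ P.support, P.coeff i * coeff n (h ^ i)
      = ∑ i ∈ P.support ∪ range (n + 1), P.coeff i * coeff n (h ^ i) :=
    Finset.sum_subset Finset.subset_union_left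
      (fun x _ hx => by rw [Polynomial.notMem_support_iff.1 hx, zero_mul])
  have e2 : ∑ i ∈ range (n + 1), P.coeff i * coeff n (h ^ i)
      = ∑ i ∈ P.support ∪ range (n + 1), P.coeff i * coeff n (h ^ i) :=
    Finset.sum_subset Finset.subset_union_right
      (fun x _ hx => by
        rw [coeff_pow_eq_zero h0 (by simpa using hx), mul_zero])
  rw [e1, ← e2]

lemma coeff_psComp_trunc {h : PowerSeries ℚ} (h0 : constantCoeff h = 0)
    (f : PowerSeries ℚ) {n N : ℕ} (hn : n < N) :
    coeff n (psComp f h) = coeff n (Polynomial.eval₂ (C) h (trunc N f)) := by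
  rw [coeff_psComp, coeff_eval₂ h0]
  refine Finset.sum_congr rfl fun i hi => ?_
  rw [coeff_trunc, if_pos (lt_of_le_of_lt (Nat.lt_succ_iff.1 (mem_range.1 hi)) hn)]

lemma psComp_mul {h : PowerSeries ℚ} (h0 : constantCoeff h = 0)
    (f g : PowerSeries ℚ) :
    psComp (f * g) h = psComp f h * psComp g h := by
  ext n
  have key : ∀ (F : PowerSeries ℚ) (c : ℕ), c ≤ n →
      coeff c (psComp F h) = coeff c (Polynomial.eval₂ (C) h (trunc (n+1) F)) :=
    fun F c hc => coeff_psComp_trunc h0 F (Nat.lt_succ_of_le hc)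
  rw [key _ n le_rfl]
  have htr : coeff n (Polynomial.eval₂ (C) h (trunc (n+1) (f * g)))
      = coeff n (Polynomial.eval₂ (C) h (trunc (n+1) f * trunc (n+1) g)) := by
    rw [coeff_eval₂ h0, coeff_eval₂ h0]
    refine Finset.sum_congr rfl fun i hi => ?_
    have hin : i < n + 1 := mem_range.1 hi
    congr 1
    rw [Polynomial.coeff_mul, coeff_trunc, if_pos hin, PowerSeries.coeff_mul]
    refine Finset.sum_congr rfl fun pq hpq => ?_
    have h1 : pq.1 ≤ i := Finset.HasAntidiagonal.antidiagonal.fst_le hpq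
    have h2 : pq.2 ≤ i := Finset.HasAntidiagonal.antidiagonal.snd_le hpq
    rw [coeff_trunc, coeff_trunc, if_pos (lt_of_le_of_lt h1 hin),
      if_pos (lt_of_le_of_lt h2 hin)]
  rw [htr, Polynomial.eval₂_mul, PowerSeries.coeff_mul, PowerSeries.coeff_mul]
  refine Finset.sum_congr rfl fun pq hpq => ?_
  rw [← key _ pq.1 (Finset.HasAntidiagonal.antidiagonal.fst_le hpq),
    ← key _ pq.2 (Finset.HasAntidiagonal.antidiagonal.snd_le hpq)]

lemma psComp_one (h : PowerSeries ℚ) : psComp 1 h = 1 := by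
  ext n
  rw [coeff_psComp, Finset.sum_eq_single 0
    (fun i _ hi => by simp [PowerSeries.coeff_one, hi])
    (fun hh => absurd (Finset.mem_range.2 n.succ_pos) hh)]
  simp [PowerSeries.coeff_one]

lemma psComp_pow {h : PowerSeries ℚ} (h0 : constantCoeff h = 0)
    (g : PowerSeries ℚ) (i : ℕ) :
    psComp (g ^ i) h = (psComp g h) ^ i := by
  induction i with
  | zero => simpa using psComp_one h
  | succ i ih => rw [pow_succ, pow_succ, psComp_mul h0, ih]

lemma psComp_sub (f g h : PowerSeries ℚ) :
    psComp (f - g) h = psComp f h - psComp g h := by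
  ext n
  simp [coeff_psComp, sub_mul, Finset.sum_sub_distrib]

lemma constantCoeff_psComp (f g : PowerSeries ℚ) :
    constantCoeff (psComp f g) = constantCoeff f := by
  have := coeff_psComp f g 0
  simp only [zero_add, Finset.sum_range_one, pow_zero] at this
  rw [← coeff_zero_eq_constantCoeff_apply, this, ← coeff_zero_eq_constantCoeff_apply]
  simp

lemma psComp_assoc {g h : PowerSeries ℚ} (g0 : constantCoeff g = 0)
    (h0 : constantCoeff h = 0) (f : PowerSeries ℚ) :
    psComp (psComp f g) h = psComp f (psComp g h) := by
  ext n
  rw [coeff_psComp, coeff_psComp]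
  have hrhs : ∀ i : ℕ, coeff n ((psComp g h) ^ i)
      = ∑ j ∈ range (n + 1), coeff j (g ^ i) * coeff n (h ^ j) := fun i => by
    rw [← psComp_pow h0, coeff_psComp]
  simp_rw [hrhs]
  have hlhs : ∀ j ∈ range (n + 1), coeff j (psComp f g) * coeff n (h ^ j)
      = ∑ i ∈ range (n + 1), coeff i f * coeff j (g ^ i) * coeff n (h ^ j) := by
    intro j hj
    rw [coeff_psComp, ← Finset.sum_mul]
    congr 1
    refine Finset.sum_subset (by
      intro x hx
      exact mem_range.2 (lt_of_lt_of_le (mem_range.1 hx)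
        (Nat.succ_le_succ (Nat.lt_succ_iff.1 (mem_range.1 hj))))) ?_
    intro x _ hx
    have hjx : j < x := by
      by_contra hc
      exact hx (mem_range.2 (Nat.lt_succ_of_le (not_lt.1 hc)))
    rw [coeff_pow_eq_zero g0 hjx, mul_zero]
  rw [Finset.sum_congr rfl hlhs, Finset.sum_comm]
  refine Finset.sum_congr rfl fun i _ => ?_
  rw [Finset.mul_sum]
  refine Finset.sum_congr rfl fun j _ => ?_
  ring

lemma constantCoeff_E (m : ℕ) : constantCoeff (E m) = 1 := by
  induction m with
  | zero => exact constantCoeff_exp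
  | succ m ih => rw [show E (m+1) = psComp (PowerSeries.exp ℚ) (E m - 1) from rfl,
      constantCoeff_psComp, constantCoeff_exp]

lemma E_succ_comp (m : ℕ) : E (m + 1) = psComp (E m) (PowerSeries.exp ℚ - 1) := by
  induction m with
  | zero => rfl
  | succ m ih =>
    have g0 : constantCoeff (E m - 1) = 0 := by
      simp [constantCoeff_E]
    have h0 : constantCoeff (PowerSeries.exp ℚ - 1) = 0 := by
      simp [constantCoeff_exp]
    calc E (m + 2) = psComp (PowerSeries.exp ℚ) (E (m+1) - 1) := rfl
      _ = psComp (PowerSeries.exp ℚ) (psComp (E m) (PowerSeries.exp ℚ - 1) - 1) := by rw [ih]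
      _ = psComp (PowerSeries.exp ℚ) (psComp (E m - 1) (PowerSeries.exp ℚ - 1)) := by
          rw [psComp_sub, psComp_one]
      _ = psComp (psComp (PowerSeries.exp ℚ) (E m - 1)) (PowerSeries.exp ℚ - 1) :=
          (psComp_assoc g0 h0 _).symm
      _ = psComp (E (m+1)) (PowerSeries.exp ℚ - 1) := rfl

end PS

section Comb
open Finset


section Congr
variable {α β : Type} [DecidableEq α] [DecidableEq β]

/-- Transport a `Finpartition` along a map that is a bijection from `s` to `t`. -/
def fpMap (f : α → β) (g : β → α) {s : Finset α} {t : Finset β}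
    (hst : s.image f = t) (hgf : ∀ x ∈ s, g (f x) = x) (P : Finpartition s) :
    Finpartition t where
  parts := P.parts.image fun p => p.image f
  supIndep := by
    rw [Finset.supIndep_iff_pairwiseDisjoint]
    intro u hu v hv huv
    obtain ⟨p, hp, rfl⟩ := Finset.mem_image.1 (Finset.mem_coe.1 hu)
    obtain ⟨q, hq, rfl⟩ := Finset.mem_image.1 (Finset.mem_coe.1 hv)
    have hpq : p ≠ q := by rintro rfl; exact huv rfl
    have hd : Disjoint p q := P.disjoint hp hq hpq
    rw [Finset.disjoint_left] at hd
    show Disjoint (id (p.image f)) (id (q.image f))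
    simp only [id_eq]
    rw [Finset.disjoint_left]
    intro x hxp hxq
    obtain ⟨a, hap, rfl⟩ := Finset.mem_image.1 hxp
    obtain ⟨b, hbq, hba⟩ := Finset.mem_image.1 hxq
    have hab : b = a := by
      have h1 := hgf a (P.le hp hap)
      have h2 := hgf b (P.le hq hbq)
      rw [← h2, hba, h1]
    exact hd hap (hab ▸ hbq)
  sup_parts := by
    subst hst
    ext x
    rw [Finset.sup_image]
    simp only [Function.comp_def, id_eq, Finset.mem_sup, Finset.mem_image]
    constructor
    · rintro ⟨p, hp, a, hap, rfl⟩
      exact ⟨a, P.le hp hap, rfl⟩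
    · rintro ⟨a, has, rfl⟩
      rw [← P.sup_parts] at has
      obtain ⟨p, hp, hap⟩ := Finset.mem_sup.1 has
      exact ⟨p, hp, a, hap, rfl⟩
  bot_notMem := by
    simp only [Finset.bot_eq_empty, Finset.mem_image]
    rintro ⟨p, hp, hpe⟩
    exact P.bot_notMem (by rw [Finset.bot_eq_empty, ← Finset.image_eq_empty.1 hpe]; exact hp)

lemma image_image_cancel {f : α → β} {g : β → α} {s : Finset α}
    (hgf : ∀ x ∈ s, g (f x) = x) {p : Finset α} (hp : p ⊆ s) :
    (p.image f).image g = p := by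
  apply Finset.ext
  intro a
  simp only [Finset.mem_image]
  constructor
  · rintro ⟨b, ⟨c, hc, rfl⟩, rfl⟩
    rw [hgf c (hp hc)]
    exact hc
  · intro ha
    exact ⟨f a, ⟨a, ha, rfl⟩, hgf a (hp ha)⟩

lemma fpMap_parts_card (f : α → β) (g : β → α) {s : Finset α} {t : Finset β}
    (hst : s.image f = t) (hgf : ∀ x ∈ s, g (f x) = x) (P : Finpartition s) :
    (fpMap f g hst hgf P).parts.card = P.parts.card := by
  apply Finset.card_image_of_injOn
  intro p hp q hq hpq
  calc p = (p.image f).image g :=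
        (image_image_cancel hgf (P.le (Finset.mem_coe.1 hp))).symm
    _ = (q.image f).image g := by rw [show p.image f = q.image f from hpq]
    _ = q := image_image_cancel hgf (P.le (Finset.mem_coe.1 hq))

/-- For finsets of equal cardinality, there is a parts-card-preserving bijection of
finpartitions. -/
lemma exists_fpEquiv {s : Finset α} {t : Finset β} (h : s.card = t.card) :
    ∃ e : Finpartition s ≃ Finpartition t, ∀ P, (e P).parts.card = P.parts.card := by
  by_cases hs : s = ∅
  · have ht : t = ∅ := Finset.card_eq_zero.1 (by rw [← h, hs, Finset.card_empty])
    have hbs : s = ⊥ := hs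
    have hbt : t = ⊥ := ht
    have key : ∀ {γ : Type} [DecidableEq γ] {u : Finset γ}, u = ⊥ →
        ∀ P : Finpartition u, P.parts = ∅ := by
      intro γ _ u hu P
      exact Finpartition.parts_eq_empty_iff.2 hu
    refine ⟨{
      toFun := fun _ => (Finpartition.empty (Finset β)).copy hbt.symm
      invFun := fun _ => (Finpartition.empty (Finset α)).copy hbs.symm
      left_inv := fun P => Finpartition.ext (by rw [key hbs P]; rfl)
      right_inv := fun P => Finpartition.ext (by rw [key hbt P]; rfl) }, ?_⟩
    intro P
    simp only [Equiv.coe_fn_mk]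
    rw [key hbs P]
    rfl
  · have hsne : s.Nonempty := Finset.nonempty_of_ne_empty hs
    have htne : t.Nonempty := Finset.card_pos.1 (by rw [← h]; exact Finset.card_pos.2 hsne)
    let e : {x // x ∈ s} ≃ {y // y ∈ t} :=
      s.equivFin.trans ((finCongr h).trans t.equivFin.symm)
    let f : α → β := fun a => if ha : a ∈ s then (e ⟨a, ha⟩ : β) else htne.choose
    let g : β → α := fun b => if hb : b ∈ t then (e.symm ⟨b, hb⟩ : α) else hsne.choose
    have hgf : ∀ x ∈ s, g (f x) = x := by
      intro x hx
      have h1 : f x = (e ⟨x, hx⟩ : β) := dif_pos hx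
      have h2 : (e ⟨x, hx⟩ : β) ∈ t := (e ⟨x, hx⟩).2
      simp only [g, h1, dif_pos h2, Subtype.coe_eta, Equiv.symm_apply_apply]
    have hfg : ∀ y ∈ t, f (g y) = y := by
      intro y hy
      have h1 : g y = (e.symm ⟨y, hy⟩ : α) := dif_pos hy
      have h2 : (e.symm ⟨y, hy⟩ : α) ∈ s := (e.symm ⟨y, hy⟩).2
      simp only [f, h1, dif_pos h2, Subtype.coe_eta, Equiv.apply_symm_apply]
    have hst : s.image f = t := by
      apply Finset.Subset.antisymm
      · intro y hy
        obtain ⟨x, hx, rfl⟩ := Finset.mem_image.1 hy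
        rw [show f x = (e ⟨x, hx⟩ : β) from dif_pos hx]
        exact (e ⟨x, hx⟩).2
      · intro y hy
        refine Finset.mem_image.2 ⟨g y, ?_, hfg y hy⟩
        rw [show g y = (e.symm ⟨y, hy⟩ : α) from dif_pos hy]
        exact (e.symm ⟨y, hy⟩).2
    have hts : t.image g = s := by
      apply Finset.Subset.antisymm
      · intro x hx
        obtain ⟨y, hy, rfl⟩ := Finset.mem_image.1 hx
        rw [show g y = (e.symm ⟨y, hy⟩ : α) from dif_pos hy]
        exact (e.symm ⟨y, hy⟩).2
      · intro x hx
        refine Finset.mem_image.2 ⟨f x, ?_, hgf x hx⟩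
        rw [show f x = (e ⟨x, hx⟩ : β) from dif_pos hx]
        exact (e ⟨x, hx⟩).2
    refine ⟨{
      toFun := fpMap f g hst hgf
      invFun := fpMap g f hts hfg
      left_inv := fun P => Finpartition.ext ?_
      right_inv := fun P => Finpartition.ext ?_ }, fun P => fpMap_parts_card f g hst hgf P⟩
    · show (P.parts.image fun p => p.image f).image (fun q => q.image g) = P.parts
      rw [Finset.image_image]
      have heq : ∀ p ∈ (P.parts : Set (Finset α)),
          ((fun q : Finset β => q.image g) ∘ fun p : Finset α => p.image f) p = id p :=
        fun p hp => image_image_cancel hgf (P.le (Finset.mem_coe.1 hp))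
      rw [Finset.image_congr heq, Finset.image_id]
    · show (P.parts.image fun p => p.image g).image (fun q => q.image f) = P.parts
      rw [Finset.image_image]
      have heq : ∀ p ∈ (P.parts : Set (Finset β)),
          ((fun q : Finset α => q.image f) ∘ fun p : Finset β => p.image g) p = id p :=
        fun p hp => image_image_cancel hfg (P.le (Finset.mem_coe.1 hp))
      rw [Finset.image_congr heq, Finset.image_id]

end Congr

section Surgery
variable {α : Type} [DecidableEq α]

/-- Remove a part from a finpartition. -/
def fpErase {s : Finset α} (P : Finpartition s) (B : Finset α) (hB : B ∈ P.parts) :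
    Finpartition (s \ B) where
  parts := P.parts.erase B
  supIndep := P.supIndep.subset (Finset.erase_subset _ _)
  sup_parts := by
    ext x
    simp only [Finset.mem_sup, Finset.mem_erase, id_eq, Finset.mem_sdiff]
    constructor
    · rintro ⟨p, ⟨hpB, hp⟩, hxp⟩
      refine ⟨P.le hp hxp, fun hxB => ?_⟩
      have hd : Disjoint p B := P.disjoint hp hB hpB
      exact Finset.disjoint_left.1 hd hxp hxB
    · rintro ⟨hxs, hxB⟩
      rw [← P.sup_parts] at hxs
      obtain ⟨p, hp, hxp⟩ := Finset.mem_sup.1 hxs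
      refine ⟨p, ⟨fun hpB => hxB (hpB ▸ hxp), hp⟩, hxp⟩
  bot_notMem := fun h => P.bot_notMem (Finset.mem_of_mem_erase h)

lemma mem_parts_not_self_sub {s B : Finset α} (hBne : B.Nonempty)
    (Q : Finpartition (s \ B)) : B ∉ Q.parts := by
  intro hB
  have h1 : B ⊆ s \ B := Q.le hB
  obtain ⟨x, hx⟩ := hBne
  exact (Finset.mem_sdiff.1 (h1 hx)).2 hx

/-- Add a new part to a finpartition of `s \ B`. -/
def fpInsert {s B : Finset α} (hBs : B ⊆ s) (hBne : B.Nonempty)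
    (Q : Finpartition (s \ B)) : Finpartition s where
  parts := insert B Q.parts
  supIndep := by
    rw [Finset.supIndep_iff_pairwiseDisjoint, Finset.coe_insert]
    refine Set.PairwiseDisjoint.insert ?_ ?_
    · exact Finset.supIndep_iff_pairwiseDisjoint.1 Q.supIndep
    · intro q hq _
      have hq' : q ⊆ s \ B := Q.le hq
      simp only [id_eq]
      exact Finset.disjoint_right.2 fun x hxq hxB =>
        (Finset.mem_sdiff.1 (hq' hxq)).2 hxB
  sup_parts := by
    rw [Finset.sup_insert, Q.sup_parts, id_eq, Finset.sup_eq_union]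
    exact Finset.union_sdiff_of_subset hBs
  bot_notMem := by
    rw [Finset.mem_insert]
    rintro (h | h)
    · rw [Finset.bot_eq_empty] at h
      rw [← h] at hBne
      exact Finset.not_nonempty_empty hBne
    · exact Q.bot_notMem h

/-- The key bijection: finpartitions of `s` having `B` as a part and `k+1` parts in total
correspond to finpartitions of `s \ B` with `k` parts. -/
def fpAvoidEquiv {s B : Finset α} (hBs : B ⊆ s) (hBne : B.Nonempty) (k : ℕ) :
    {P : Finpartition s // P.parts.card = k + 1 ∧ B ∈ P.parts}
      ≃ {Q : Finpartition (s \ B) // Q.parts.card = k} where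
  toFun P := ⟨fpErase P.1 B P.2.2, by
    have := P.2.1
    simp only [fpErase, Finset.card_erase_of_mem P.2.2, this]
    omega⟩
  invFun Q := ⟨fpInsert hBs hBne Q.1, by
    constructor
    · simp only [fpInsert,
        Finset.card_insert_of_notMem (mem_parts_not_self_sub hBne Q.1), Q.2]
    · simp [fpInsert]⟩
  left_inv P := by
    apply Subtype.ext
    apply Finpartition.ext
    simp only [fpInsert, fpErase]
    exact Finset.insert_erase P.2.2
  right_inv Q := by
    apply Subtype.ext
    apply Finpartition.ext
    simp only [fpInsert, fpErase]
    exact Finset.erase_insert (mem_parts_not_self_sub hBne Q.1)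

end Surgery

instance hpFintype : ∀ (m : ℕ) {α : Type} [DecidableEq α] (s : Finset α),
    Fintype (HyperPartition m s)
  | 0, _, _, _ => inferInstanceAs (Fintype PUnit)
  | (m + 1), α, _, s => by
    letI : ∀ P : Finpartition s, Fintype (HyperPartition m P.parts) :=
      fun P => hpFintype m P.parts
    exact inferInstanceAs (Fintype ((P : Finpartition s) × HyperPartition m P.parts))

lemma card_finpartition_subtype_congr {α β : Type} [DecidableEq α] [DecidableEq β]
    {s : Finset α} {t : Finset β} (h : s.card = t.card) (k : ℕ) :
    Nat.card {P : Finpartition s // P.parts.card = k}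
      = Nat.card {P : Finpartition t // P.parts.card = k} := by
  obtain ⟨e, he⟩ := exists_fpEquiv h
  exact Nat.card_congr (e.subtypeEquiv fun P => by rw [he P])

lemma stirling_inv {α : Type} [DecidableEq α] (s : Finset α) (k : ℕ) :
    Nat.card {P : Finpartition s // P.parts.card = k} = stirling s.card k := by
  rw [stirling]
  exact card_finpartition_subtype_congr (by simp) k

lemma card_hp_succ (m : ℕ)
    (ih : ∀ {γ : Type} [DecidableEq γ] (u : Finset γ),
      Nat.card (HyperPartition m u) = hyperBell m u.card)
    {α : Type} [DecidableEq α] (s : Finset α) :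
    Nat.card (HyperPartition (m + 1) s)
      = ∑ k ∈ range (s.card + 1), stirling s.card k * hyperBell m k := by
  have h1 : Nat.card (HyperPartition (m + 1) s)
      = ∑ P : Finpartition s, Nat.card (HyperPartition m P.parts) := by
    have : Nat.card (HyperPartition (m + 1) s)
        = Nat.card ((P : Finpartition s) × HyperPartition m P.parts) := rfl
    rw [this, Nat.card_eq_fintype_card, Fintype.card_sigma]
    simp_rw [Nat.card_eq_fintype_card]
  rw [h1]
  have h2 : ∀ P : Finpartition s,
      Nat.card (HyperPartition m P.parts) = hyperBell m P.parts.card :=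
    fun P => ih P.parts
  rw [Finset.sum_congr rfl fun P _ => h2 P]
  rw [← Finset.sum_fiberwise_of_maps_to
    (g := fun P : Finpartition s => P.parts.card) (t := range (s.card + 1))
    (fun P _ => mem_range.2 (Nat.lt_succ_of_le P.card_parts_le_card))
    (fun P => hyperBell m P.parts.card)]
  refine Finset.sum_congr rfl fun k _ => ?_
  rw [Finset.sum_congr rfl (fun P hP => by rw [(Finset.mem_filter.1 hP).2]),
    Finset.sum_const, smul_eq_mul]
  congr 1
  rw [← stirling_inv s k, Nat.card_eq_fintype_card, Fintype.card_subtype]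

lemma hyper_card : ∀ (m : ℕ) {α : Type} [DecidableEq α] (s : Finset α),
    Nat.card (HyperPartition m s) = hyperBell m s.card := by
  intro m
  induction m with
  | zero =>
    intro α _ s
    rfl
  | succ m ih =>
    intro α _ s
    rw [card_hp_succ m (fun u => ih u) s]
    have h2 := card_hp_succ m (fun u => ih u) (Finset.univ : Finset (Fin s.card))
    simp only [Finset.card_univ, Fintype.card_fin] at h2
    rw [show hyperBell (m+1) s.card
      = Nat.card (HyperPartition (m+1) (Finset.univ : Finset (Fin s.card))) from rfl, h2]

lemma hyperBell_succ (m n : ℕ) :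
    hyperBell (m + 1) n = ∑ k ∈ range (n + 1), stirling n k * hyperBell m k := by
  have h := card_hp_succ m (fun u => hyper_card m u) (Finset.univ : Finset (Fin n))
  have hcard : (Finset.univ : Finset (Fin n)).card = n := by
    rw [Finset.card_univ, Fintype.card_fin]
  rw [hcard] at h
  exact h

lemma hyperBell_zero (n : ℕ) : hyperBell 0 n = 1 := by
  haveI : Unique (HyperPartition 0 (Finset.univ : Finset (Fin n))) :=
    inferInstanceAs (Unique PUnit)
  exact Nat.card_unique

lemma stirling_zero (n : ℕ) : stirling n 0 = if n = 0 then 1 else 0 := by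
  rcases n with _ | n
  · rw [if_pos rfl, stirling, Nat.card_eq_one_iff_unique]
    constructor
    · constructor
      intro P Q
      apply Subtype.ext
      apply Finpartition.ext
      rw [Finpartition.parts_eq_empty_iff.2 (by simp), Finpartition.parts_eq_empty_iff.2 (by simp)]
    · refine ⟨⟨(Finpartition.empty (Finset (Fin 0))).copy (by simp), ?_⟩⟩
      show (Finpartition.empty (Finset (Fin 0))).parts.card = 0
      rfl
  · rw [if_neg (Nat.succ_ne_zero n), stirling]
    haveI : IsEmpty {P : Finpartition (Finset.univ : Finset (Fin (n+1))) // P.parts.card = 0} := by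
      constructor
      rintro ⟨P, hP⟩
      have : P.parts = ∅ := Finset.card_eq_zero.1 hP
      have h2 : (Finset.univ : Finset (Fin (n+1))) = ⊥ := Finpartition.parts_eq_empty_iff.1 this
      have h3 : (0 : Fin (n+1)) ∈ (Finset.univ : Finset (Fin (n+1))) := Finset.mem_univ _
      rw [h2] at h3
      exact absurd h3 (Finset.notMem_empty _)
    exact Nat.card_of_isEmpty

lemma stirling_rec (n k : ℕ) :
    (k + 1) * stirling n (k + 1) = ∑ j ∈ range n, n.choose j * stirling j k := by
  set T := {x : Finpartition (Finset.univ : Finset (Fin n)) × Finset (Fin n) //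
    x.1.parts.card = k + 1 ∧ x.2 ∈ x.1.parts} with hT
  -- Count by the partition.
  have count1 : Nat.card T = (k + 1) * stirling n (k + 1) := by
    have e1 : T ≃ (P : Finpartition (Finset.univ : Finset (Fin n))) ×
        {B : Finset (Fin n) // P.parts.card = k + 1 ∧ B ∈ P.parts} :=
      Equiv.subtypeProdEquivSigmaSubtype
        fun (P : Finpartition (Finset.univ : Finset (Fin n))) (B : Finset (Fin n)) =>
          P.parts.card = k + 1 ∧ B ∈ P.parts
    rw [Nat.card_congr e1, Nat.card_eq_fintype_card, Fintype.card_sigma]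
    have hP : ∀ P : Finpartition (Finset.univ : Finset (Fin n)),
        Fintype.card {B : Finset (Fin n) // P.parts.card = k + 1 ∧ B ∈ P.parts}
          = if P.parts.card = k + 1 then k + 1 else 0 := by
      intro P
      by_cases h : P.parts.card = k + 1
      · rw [if_pos h]
        have e : {B : Finset (Fin n) // P.parts.card = k + 1 ∧ B ∈ P.parts}
            ≃ {B : Finset (Fin n) // B ∈ P.parts} :=
          Equiv.subtypeEquivRight fun B => by simp [h]
        rw [Fintype.card_congr e, Fintype.card_coe, h]
      · rw [if_neg h]
        rw [Fintype.card_eq_zero_iff]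
        exact ⟨fun x => h x.2.1⟩
    rw [Finset.sum_congr rfl fun P _ => hP P]
    rw [← Finset.sum_filter, Finset.sum_const, smul_eq_mul]
    rw [stirling, Nat.card_eq_fintype_card, Fintype.card_subtype]
    ring
  -- Count by the distinguished part.
  have count2 : Nat.card T = ∑ j ∈ range n, n.choose j * stirling j k := by
    have e0 : T ≃ {x : Finset (Fin n) × Finpartition (Finset.univ : Finset (Fin n)) //
        x.2.parts.card = k + 1 ∧ x.1 ∈ x.2.parts} :=
      (Equiv.prodComm _ _).subtypeEquiv fun x => by simp [Equiv.prodComm]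
    have e2 : T ≃ (B : Finset (Fin n)) ×
        {P : Finpartition (Finset.univ : Finset (Fin n)) //
          P.parts.card = k + 1 ∧ B ∈ P.parts} :=
      e0.trans (Equiv.subtypeProdEquivSigmaSubtype
        fun (B : Finset (Fin n)) (P : Finpartition (Finset.univ : Finset (Fin n))) =>
          P.parts.card = k + 1 ∧ B ∈ P.parts)
    rw [Nat.card_congr e2, Nat.card_eq_fintype_card, Fintype.card_sigma]
    have hB : ∀ B : Finset (Fin n),
        Fintype.card {P : Finpartition (Finset.univ : Finset (Fin n)) //
          P.parts.card = k + 1 ∧ B ∈ P.parts}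
          = if B = ∅ then 0 else stirling (n - B.card) k := by
      intro B
      by_cases hBe : B = ∅
      · rw [if_pos hBe]
        rw [Fintype.card_eq_zero_iff]
        subst hBe
        refine ⟨fun x => x.1.bot_notMem ?_⟩
        have hmem := x.2.2
        exact hmem
      · rw [if_neg hBe]
        have hBne : B.Nonempty := Finset.nonempty_of_ne_empty hBe
        rw [← Nat.card_eq_fintype_card, Nat.card_congr (fpAvoidEquiv (Finset.subset_univ B) hBne k)]
        rw [stirling_inv]
        congr 1
        rw [Finset.card_sdiff_of_subset (Finset.subset_univ B), Finset.card_univ, Fintype.card_fin]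
    rw [Finset.sum_congr rfl fun B _ => hB B]
    rw [show (Finset.univ : Finset (Finset (Fin n)))
      = (Finset.univ : Finset (Fin n)).powerset from (Finset.powerset_univ).symm]
    rw [Finset.sum_powerset]
    simp only [Finset.card_univ, Fintype.card_fin]
    have hinner : ∀ j ∈ range (n + 1),
        (∑ B ∈ Finset.powersetCard j (Finset.univ : Finset (Fin n)),
          if B = ∅ then 0 else stirling (n - B.card) k)
          = if j = 0 then 0 else n.choose j * stirling (n - j) k := by
      intro j _
      by_cases hj : j = 0
      · subst hj
        rw [if_pos rfl]
        rw [Finset.powersetCard_zero]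
        simp
      · rw [if_neg hj]
        have : ∀ B ∈ Finset.powersetCard j (Finset.univ : Finset (Fin n)),
            (if B = ∅ then 0 else stirling (n - B.card) k) = stirling (n - j) k := by
          intro B hBp
          have hBcard : B.card = j := (Finset.mem_powersetCard.1 hBp).2
          have hBne : B ≠ ∅ := by
            intro h
            rw [h, Finset.card_empty] at hBcard
            exact hj hBcard.symm
          rw [if_neg hBne, hBcard]
        rw [Finset.sum_congr rfl this, Finset.sum_const, smul_eq_mul,
          Finset.card_powersetCard, Finset.card_univ, Fintype.card_fin]
    rw [Finset.sum_congr rfl hinner]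
    rw [Finset.sum_range_succ']
    rw [if_pos rfl, add_zero]
    have hterm : ∀ i, (if i + 1 = 0 then 0 else n.choose (i+1) * stirling (n - (i+1)) k)
        = n.choose (i+1) * stirling (n - (i+1)) k := fun i => if_neg (Nat.succ_ne_zero i)
    rw [Finset.sum_congr rfl fun i _ => hterm i]
    rw [← Finset.sum_range_reflect]
    refine Finset.sum_congr rfl fun j hj => ?_
    have hj' : j < n := mem_range.1 hj
    have h1 : n - 1 - j + 1 = n - j := by omega
    have h2 : n - (n - j) = j := by omega
    rw [h1, h2, Nat.choose_symm hj'.le]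
  rw [← count1, count2]

end Comb

section Final
open PowerSeries Finset
noncomputable def Aq (n k : ℕ) : ℚ :=
  (n.factorial : ℚ) * coeff n ((PowerSeries.exp ℚ - 1) ^ k)

lemma Aq_zero (n : ℕ) : Aq n 0 = if n = 0 then 1 else 0 := by
  rcases n with _ | n <;>
    simp [Aq, PowerSeries.coeff_one, Nat.succ_ne_zero]

lemma coeff_exp_sub_one (q : ℕ) :
    coeff q (PowerSeries.exp ℚ - 1) = if q = 0 then 0 else ((q.factorial : ℚ))⁻¹ := by
  rw [map_sub, PowerSeries.coeff_exp, PowerSeries.coeff_one]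
  rcases eq_or_ne q 0 with h | h
  · subst h; simp
  · rw [if_neg h, if_neg h, sub_zero]
    simp [Algebra.algebraMap_self, one_div]

lemma Aq_succ (n k : ℕ) :
    Aq n (k + 1) = ∑ j ∈ range n, (n.choose j : ℚ) * Aq j k := by
  unfold Aq
  rw [pow_succ, PowerSeries.coeff_mul, Finset.Nat.sum_antidiagonal_eq_sum_range_succ_mk,
    Finset.sum_range_succ]
  rw [show coeff (n - n) (PowerSeries.exp ℚ - 1) = 0 by
    rw [Nat.sub_self, coeff_exp_sub_one, if_pos rfl]]
  rw [mul_zero, add_zero, Finset.mul_sum]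
  refine Finset.sum_congr rfl fun p hp => ?_
  have hpn : p < n := mem_range.1 hp
  rw [coeff_exp_sub_one, if_neg (by omega : ¬ n - p = 0)]
  have hfact : (n.factorial : ℚ) = (n.choose p : ℚ) * p.factorial * (n - p).factorial := by
    rw [← Nat.cast_mul, ← Nat.cast_mul, ← Nat.choose_mul_factorial_mul_factorial hpn.le]
  rw [hfact]
  have hne : ((n - p).factorial : ℚ) ≠ 0 := Nat.cast_ne_zero.2 (Nat.factorial_ne_zero _)
  field_simp

lemma Aq_eq (k : ℕ) : ∀ n, Aq n k = (k.factorial : ℚ) * stirling n k := by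
  induction k with
  | zero =>
    intro n
    rw [Aq_zero, stirling_zero]
    split_ifs <;> simp
  | succ k ih =>
    intro n
    rw [Aq_succ]
    simp_rw [ih]
    have hrec := stirling_rec n k
    have hcast : ((k+1) * stirling n (k+1) : ℚ) = ∑ j ∈ range n, (n.choose j : ℚ) * stirling j k := by
      rw [show ((k+1) * stirling n (k+1) : ℚ) = (((k+1) * stirling n (k+1) : ℕ) : ℚ) by push_cast; ring,
        hrec]
      push_cast
      ring
    calc ∑ j ∈ range n, (n.choose j : ℚ) * ((k.factorial : ℚ) * stirling j k)
        = (k.factorial : ℚ) * ∑ j ∈ range n, (n.choose j : ℚ) * stirling j k := by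
          rw [Finset.mul_sum]; exact Finset.sum_congr rfl fun j _ => by ring
      _ = (k.factorial : ℚ) * ((k+1) * stirling n (k+1)) := by rw [← hcast]
      _ = ((k+1).factorial : ℚ) * stirling n (k+1) := by
          rw [Nat.factorial_succ]; push_cast; ring

lemma bell_zero (n : ℕ) : bell 0 n = 1 := by
  rw [bell, show E 0 = PowerSeries.exp ℚ from rfl, PowerSeries.coeff_exp]
  have hne : (n.factorial : ℚ) ≠ 0 := Nat.cast_ne_zero.2 (Nat.factorial_ne_zero _)
  simp [Algebra.algebraMap_self]
  field_simp

lemma bell_succ (m n : ℕ) :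
    bell (m + 1) n = ∑ k ∈ range (n + 1), (stirling n k : ℚ) * bell m k := by
  rw [bell, E_succ_comp, coeff_psComp, Finset.mul_sum]
  refine Finset.sum_congr rfl fun i _ => ?_
  have hAq : (n.factorial : ℚ) * coeff n ((PowerSeries.exp ℚ - 1) ^ i) = Aq n i := rfl
  have h2 := Aq_eq i n
  rw [bell]
  calc (n.factorial : ℚ) * (coeff i (E m) * coeff n ((PowerSeries.exp ℚ - 1) ^ i))
      = coeff i (E m) * ((n.factorial : ℚ) * coeff n ((PowerSeries.exp ℚ - 1) ^ i)) := by ring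
    _ = coeff i (E m) * ((i.factorial : ℚ) * stirling n i) := by rw [hAq, h2]
    _ = (stirling n i : ℚ) * ((i.factorial : ℚ) * coeff i (E m)) := by ring

theorem main (m : ℕ) : ∀ n, (hyperBell m n : ℚ) = bell m n := by
  induction m with
  | zero =>
    intro n
    rw [hyperBell_zero, bell_zero, Nat.cast_one]
  | succ m ih =>
    intro n
    rw [bell_succ, hyperBell_succ]
    push_cast
    exact Finset.sum_congr rfl fun k _ => by rw [ih k]

end Final

/-- `|℘ₙ^(m)| = Bₙ^(m)` for `n ≥ 1`, `m ≥ 1`. -/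
theorem stmt1 (n m : ℕ) (hn : 1 ≤ n) (hm : 1 ≤ m) :
    (hyperBell m n : ℚ) = bell m n := main m n
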